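/- A function f : E → [0,∞] is upper radial if and only if (f^Γ)^Γ = f, i.e. applying the upper radial transformation twice recovers f. Likewise, f is lower radial if and only if (f_Γ)_Γ = f. -/

import Mathlib

open Set
open scoped ENNReal RealInnerProductSpace

noncomputable section

variable {E : Type*} [NormedAddCommGroup E] [InnerProductSpace ℝ E] [FiniteDimensional ℝ E]

/-- The perspective function `f^p(y,v) = v·f(y/v)` (for `v > 0`). -/
def persp (f : E → ℝ≥0∞) (y : E) (v : ℝ) : ℝ≥0∞ := ENNReal.ofReal v * f (v⁻¹ • y)

/-- The upper radial transformation `f^Γ(y) = sup{v > 0 : v·f(y/v) ≤ 1}` (`sup ∅ = 0`). -/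
def radSup (f : E → ℝ≥0∞) (y : E) : ℝ≥0∞ :=
  ⨆ (v : ℝ) (_ : 0 < v) (_ : persp f y v ≤ 1), ENNReal.ofReal v

/-- The lower radial transformation `f_Γ(y) = inf{v > 0 : v·f(y/v) ≥ 1}` (`inf ∅ = ∞`). -/
def radInf (f : E → ℝ≥0∞) (y : E) : ℝ≥0∞ :=
  ⨅ (v : ℝ) (_ : 0 < v) (_ : 1 ≤ persp f y v), ENNReal.ofReal v

/-- `f` is upper radial: every `f^p(y,·)` is nondecreasing and upper semicontinuous on `ℝ₊₊`. -/
def UpperRadial (f : E → ℝ≥0∞) : Prop :=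
  ∀ y : E, MonotoneOn (persp f y) (Ioi (0 : ℝ)) ∧
    UpperSemicontinuousOn (persp f y) (Ioi (0 : ℝ))

/-- `f` is lower radial: every `f^p(y,·)` is nondecreasing and lower semicontinuous on `ℝ₊₊`. -/
def LowerRadial (f : E → ℝ≥0∞) : Prop :=
  ∀ y : E, MonotoneOn (persp f y) (Ioi (0 : ℝ)) ∧
    LowerSemicontinuousOn (persp f y) (Ioi (0 : ℝ))


open Topology Filter
set_option linter.unusedVariables false
set_option linter.unusedSectionVars false

/-- One-variable upper radial transform. -/
def Tr (g : ℝ → ℝ≥0∞) (v : ℝ) : ℝ≥0∞ :=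
  ⨆ (w : ℝ) (_ : 0 < w) (_ : g w ≤ ENNReal.ofReal v), ENNReal.ofReal w

/-- One-variable lower radial transform. -/
def Ur (g : ℝ → ℝ≥0∞) (v : ℝ) : ℝ≥0∞ :=
  ⨅ (w : ℝ) (_ : 0 < w) (_ : ENNReal.ofReal v ≤ g w), ENNReal.ofReal w

lemma Tr_congr {g g' : ℝ → ℝ≥0∞} (h : ∀ w, 0 < w → g w = g' w) : Tr g = Tr g' := by
  funext v
  unfold Tr
  refine iSup_congr fun w => ?_
  by_cases hw : 0 < w
  · simp [hw, h w hw]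
  · simp [hw]

lemma Ur_congr {g g' : ℝ → ℝ≥0∞} (h : ∀ w, 0 < w → g w = g' w) : Ur g = Ur g' := by
  funext v
  unfold Ur
  refine iInf_congr fun w => ?_
  by_cases hw : 0 < w
  · simp [hw, h w hw]
  · simp [hw]

lemma Tr_mono (g : ℝ → ℝ≥0∞) : Monotone (Tr g) := by
  intro a b hab
  refine iSup_le fun w => iSup_le fun hw => iSup_le fun hc => ?_
  exact le_iSup_of_le w (le_iSup_of_le hw (le_iSup_of_le
    (hc.trans (ENNReal.ofReal_le_ofReal hab)) le_rfl))

lemma Ur_mono (g : ℝ → ℝ≥0∞) : Monotone (Ur g) := by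
  intro a b hab
  refine le_iInf fun w => le_iInf fun hw => le_iInf fun hc => ?_
  exact iInf_le_of_le w (iInf_le_of_le hw (iInf_le_of_le
    ((ENNReal.ofReal_le_ofReal hab).trans hc) le_rfl))

/-- `⨆ {w > 0 : ofReal w < c} = c`. -/
lemma iSup_ofReal_lt (c : ℝ≥0∞) :
    ⨆ (w : ℝ) (_ : 0 < w) (_ : ENNReal.ofReal w < c), ENNReal.ofReal w = c := by
  refine le_antisymm (iSup_le fun w => iSup_le fun hw => iSup_le fun hc => hc.le) ?_
  by_contra hlt
  push_neg at hlt
  obtain ⟨r, hr0, h1, h2⟩ := ENNReal.lt_iff_exists_real_btwn.mp hlt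
  have hrpos : 0 < r := ENNReal.ofReal_pos.mp (lt_of_le_of_lt bot_le h1)
  exact h1.not_ge (le_iSup_of_le r (le_iSup_of_le hrpos (le_iSup_of_le h2 le_rfl)))

/-- `⨅ {w > 0 : c < ofReal w} = c`. -/
lemma iInf_lt_ofReal (c : ℝ≥0∞) :
    ⨅ (w : ℝ) (_ : 0 < w) (_ : c < ENNReal.ofReal w), ENNReal.ofReal w = c := by
  refine le_antisymm ?_ (le_iInf fun w => le_iInf fun hw => le_iInf fun hc => hc.le)
  by_contra hlt
  push_neg at hlt
  obtain ⟨r, hr0, h1, h2⟩ := ENNReal.lt_iff_exists_real_btwn.mp hlt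
  have hrpos : 0 < r := ENNReal.ofReal_pos.mp (lt_of_le_of_lt bot_le h1)
  exact h2.not_ge (iInf_le_of_le r (iInf_le_of_le hrpos (iInf_le_of_le h1 le_rfl)))

/-- `⨅ {u : v < u} ofReal u = ofReal v` for `0 ≤ v`. -/
lemma iInf_ofReal_gt (v : ℝ) (hv : 0 ≤ v) :
    ⨅ (u : ℝ) (_ : v < u), ENNReal.ofReal u = ENNReal.ofReal v := by
  refine le_antisymm ?_ (le_iInf fun u => le_iInf fun hu => ENNReal.ofReal_le_ofReal hu.le)
  by_contra hlt
  push_neg at hlt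
  obtain ⟨r, hr0, h1, h2⟩ := ENNReal.lt_iff_exists_real_btwn.mp hlt
  have hvr : v < r := by
    by_contra hle
    exact absurd (ENNReal.ofReal_le_ofReal (not_lt.mp hle)) (not_le.mpr h1)
  exact h2.not_ge (iInf_le_of_le r (iInf_le_of_le hvr le_rfl))

/-- `⨆ {u : 0 < u < v} ofReal u = ofReal v` for `0 < v`. -/
lemma iSup_ofReal_lt_real (v : ℝ) (hv : 0 < v) :
    ⨆ (u : ℝ) (_ : 0 < u) (_ : u < v), ENNReal.ofReal u = ENNReal.ofReal v := by
  refine le_antisymm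
    (iSup_le fun u => iSup_le fun hu => iSup_le fun huv => ENNReal.ofReal_le_ofReal huv.le) ?_
  by_contra hlt
  push_neg at hlt
  obtain ⟨r, hr0, h1, h2⟩ := ENNReal.lt_iff_exists_real_btwn.mp hlt
  have hrpos : 0 < r := ENNReal.ofReal_pos.mp (lt_of_le_of_lt bot_le h1)
  have hrv : r < v := (ENNReal.ofReal_lt_ofReal_iff hv).mp h2
  exact h1.not_ge (le_iSup_of_le r (le_iSup_of_le hrpos (le_iSup_of_le hrv le_rfl)))
/-- Right-continuity of `Tr g` for `g` monotone on `(0,∞)`. -/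
lemma Tr_right {g : ℝ → ℝ≥0∞} (hg : MonotoneOn g (Ioi 0)) {v : ℝ} (hv : 0 < v)
    {c : ℝ≥0∞} (hc : Tr g v < c) : ∃ u, v < u ∧ Tr g u < c := by
  by_contra h
  push_neg at h
  obtain ⟨r, hr0, h1, h2⟩ := ENNReal.lt_iff_exists_real_btwn.mp hc
  have hrpos : 0 < r := ENNReal.ofReal_pos.mp (lt_of_le_of_lt bot_le h1)
  have key : ∀ u, v < u → g r ≤ ENNReal.ofReal u := by
    intro u hu
    have : ENNReal.ofReal r < Tr g u := lt_of_lt_of_le h2 (h u hu)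
    rw [Tr, lt_iSup_iff] at this
    obtain ⟨w, hw⟩ := this
    rw [lt_iSup_iff] at hw
    obtain ⟨hwpos, hw⟩ := hw
    rw [lt_iSup_iff] at hw
    obtain ⟨hcond, hw⟩ := hw
    have hrw : r ≤ w := by
      by_contra hlt
      exact hw.not_ge (ENNReal.ofReal_le_ofReal (not_le.mp hlt).le)
    exact (hg hrpos hwpos hrw).trans hcond
  have : g r ≤ ENNReal.ofReal v := by
    rw [← iInf_ofReal_gt v hv.le]
    exact le_iInf fun u => le_iInf fun hu => key u hu
  exact h1.not_ge (le_iSup_of_le r (le_iSup_of_le hrpos (le_iSup_of_le this le_rfl)))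

/-- Left-continuity of `Ur g` for `g` monotone on `(0,∞)`. -/
lemma Ur_left {g : ℝ → ℝ≥0∞} (hg : MonotoneOn g (Ioi 0)) {v : ℝ} (hv : 0 < v)
    {c : ℝ≥0∞} (hc : c < Ur g v) : ∃ u, 0 < u ∧ u < v ∧ c < Ur g u := by
  by_contra h
  push_neg at h
  obtain ⟨r, hr0, h1, h2⟩ := ENNReal.lt_iff_exists_real_btwn.mp hc
  have hrpos : 0 < r := ENNReal.ofReal_pos.mp (lt_of_le_of_lt bot_le h1)
  have key : ∀ u, 0 < u → u < v → ENNReal.ofReal u ≤ g r := by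
    intro u hu huv
    have : Ur g u < ENNReal.ofReal r := lt_of_le_of_lt (h u hu huv) h1
    rw [Ur, iInf_lt_iff] at this
    obtain ⟨w, hw⟩ := this
    rw [iInf_lt_iff] at hw
    obtain ⟨hwpos, hw⟩ := hw
    rw [iInf_lt_iff] at hw
    obtain ⟨hcond, hw⟩ := hw
    have hwr : w ≤ r := by
      by_contra hlt
      exact hw.not_ge (ENNReal.ofReal_le_ofReal (not_le.mp hlt).le)
    exact hcond.trans (hg hwpos hrpos hwr)
  have : ENNReal.ofReal v ≤ g r := by
    rw [← iSup_ofReal_lt_real v hv]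
    exact iSup_le fun u => iSup_le fun hu => iSup_le fun huv => key u hu huv
  exact h2.not_ge (iInf_le_of_le r (iInf_le_of_le hrpos (iInf_le_of_le this le_rfl)))

/-- `g ≤ Tr (Tr g)` on `(0,∞)` for monotone `g`. -/
lemma le_Tr_Tr {g : ℝ → ℝ≥0∞} (hg : MonotoneOn g (Ioi 0)) {v : ℝ} (hv : 0 < v) :
    g v ≤ Tr (Tr g) v := by
  conv_lhs => rw [← iSup_ofReal_lt (g v)]
  refine iSup_le fun w => iSup_le fun hw => iSup_le fun hwc => ?_
  have hTr : Tr g w ≤ ENNReal.ofReal v := by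
    refine iSup_le fun u => iSup_le fun hu => iSup_le fun hcond => ?_
    refine ENNReal.ofReal_le_ofReal ?_
    by_contra hlt
    exact ((hg hv hu (not_le.mp hlt).le).trans hcond).not_gt hwc
  exact le_iSup_of_le w (le_iSup_of_le hw (le_iSup_of_le hTr le_rfl))

/-- `Tr (Tr g) ≤ g` on `(0,∞)` for monotone usc `g`. -/
lemma Tr_Tr_le {g : ℝ → ℝ≥0∞} (husc : UpperSemicontinuousOn g (Ioi 0)) {v : ℝ} (hv : 0 < v) :
    Tr (Tr g) v ≤ g v := by
  refine iSup_le fun w => iSup_le fun hw => iSup_le fun hTr => ?_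
  by_contra hlt
  push_neg at hlt
  have hev : ∀ᶠ y in 𝓝[Ioi (0:ℝ)] v, g y < ENNReal.ofReal w := husc v hv _ hlt
  have hev' : ∀ᶠ y in 𝓝[Ioi v] v, g y < ENNReal.ofReal w ∧ y ∈ Ioi v :=
    ((hev.filter_mono (nhdsWithin_mono v (Ioi_subset_Ioi hv.le))).and
      eventually_mem_nhdsWithin)
  obtain ⟨u, hgu, huv⟩ := hev'.exists
  have : ENNReal.ofReal u ≤ Tr g w :=
    le_iSup_of_le u (le_iSup_of_le (hv.trans huv) (le_iSup_of_le hgu.le le_rfl))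
  have huv' : u ≤ v := (ENNReal.ofReal_le_ofReal_iff hv.le).mp (this.trans hTr)
  exact huv.not_ge huv'

/-- `Ur (Ur g) ≤ g` on `(0,∞)` for monotone `g`. -/
lemma Ur_Ur_le {g : ℝ → ℝ≥0∞} (hg : MonotoneOn g (Ioi 0)) {v : ℝ} (hv : 0 < v) :
    Ur (Ur g) v ≤ g v := by
  conv_rhs => rw [← iInf_lt_ofReal (g v)]
  refine le_iInf fun w => le_iInf fun hw => le_iInf fun hwc => ?_
  have hUr : ENNReal.ofReal v ≤ Ur g w := by
    refine le_iInf fun u => le_iInf fun hu => le_iInf fun hcond => ?_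
    refine ENNReal.ofReal_le_ofReal ?_
    by_contra hlt
    exact (hcond.trans (hg hu hv (not_le.mp hlt).le)).not_gt hwc
  exact iInf_le_of_le w (iInf_le_of_le hw (iInf_le_of_le hUr le_rfl))

/-- `g ≤ Ur (Ur g)` on `(0,∞)` for monotone lsc `g`. -/
lemma le_Ur_Ur {g : ℝ → ℝ≥0∞} (hlsc : LowerSemicontinuousOn g (Ioi 0)) {v : ℝ} (hv : 0 < v) :
    g v ≤ Ur (Ur g) v := by
  refine le_iInf fun w => le_iInf fun hw => le_iInf fun hUr => ?_
  by_contra hlt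
  push_neg at hlt
  have hev : ∀ᶠ y in 𝓝[Ioi (0:ℝ)] v, ENNReal.ofReal w < g y := hlsc v hv _ hlt
  have hne : (𝓝[Ioo (0:ℝ) v] v).NeBot := right_nhdsWithin_Ioo_neBot hv
  have hev' : ∀ᶠ y in 𝓝[Ioo (0:ℝ) v] v, ENNReal.ofReal w < g y ∧ y ∈ Ioo (0:ℝ) v :=
    ((hev.filter_mono (nhdsWithin_mono v Ioo_subset_Ioi_self)).and
      eventually_mem_nhdsWithin)
  obtain ⟨u, hgu, hu⟩ := hev'.exists
  have h1 : Ur g w ≤ ENNReal.ofReal u :=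
    iInf_le_of_le u (iInf_le_of_le hu.1 (iInf_le_of_le hgu.le le_rfl))
  have := hUr.trans h1
  exact (ENNReal.ofReal_lt_ofReal_iff hv).mpr hu.2 |>.not_ge this
lemma usc_on_of_right {F : ℝ → ℝ≥0∞} (hmono : MonotoneOn F (Ioi 0))
    (hright : ∀ v, 0 < v → ∀ c, F v < c → ∃ u, v < u ∧ F u < c) :
    UpperSemicontinuousOn F (Ioi 0) := by
  intro v hv c hc
  obtain ⟨u, hvu, hFu⟩ := hright v hv c hc
  have hmem : Iio u ∈ 𝓝[Ioi (0:ℝ)] v := mem_nhdsWithin_of_mem_nhds (Iio_mem_nhds hvu)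
  filter_upwards [hmem, eventually_mem_nhdsWithin] with y hy hy'
  exact lt_of_le_of_lt (hmono hy' (lt_trans hv hvu) (le_of_lt hy)) hFu

lemma lsc_on_of_left {F : ℝ → ℝ≥0∞} (hmono : MonotoneOn F (Ioi 0))
    (hleft : ∀ v, 0 < v → ∀ c, c < F v → ∃ u, 0 < u ∧ u < v ∧ c < F u) :
    LowerSemicontinuousOn F (Ioi 0) := by
  intro v hv c hc
  obtain ⟨u, hu, huv, hFu⟩ := hleft v hv c hc
  have hmem : Ioi u ∈ 𝓝[Ioi (0:ℝ)] v := mem_nhdsWithin_of_mem_nhds (Ioi_mem_nhds huv)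
  filter_upwards [hmem, eventually_mem_nhdsWithin] with y hy hy'
  exact lt_of_lt_of_le hFu (hmono hu hy' (le_of_lt hy))
variable {f : E → ℝ≥0∞} {y : E}

lemma persp_one (f : E → ℝ≥0∞) (y : E) : persp f y 1 = f y := by
  simp [persp]

lemma radSup_eq_Tr (f : E → ℝ≥0∞) (y : E) : radSup f y = Tr (persp f y) 1 := by
  simp [radSup, Tr, ENNReal.ofReal_one]

lemma radInf_eq_Ur (f : E → ℝ≥0∞) (y : E) : radInf f y = Ur (persp f y) 1 := by
  simp [radInf, Ur, ENNReal.ofReal_one]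

lemma persp_smul_inv {v u : ℝ} (hv : 0 < v) (hu : 0 < u) (f : E → ℝ≥0∞) (y : E) :
    persp f y (v * u) = ENNReal.ofReal v * persp f (v⁻¹ • y) u := by
  unfold persp
  rw [ENNReal.ofReal_mul hv.le, mul_assoc]
  congr 2
  rw [smul_smul]
  congr 1
  rw [mul_inv_rev, mul_comm]

lemma persp_radSup {v : ℝ} (hv : 0 < v) (f : E → ℝ≥0∞) (y : E) :
    persp (radSup f) y v = Tr (persp f y) v := by
  have hv0 : ENNReal.ofReal v ≠ 0 := (ENNReal.ofReal_pos.mpr hv).ne'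
  have hvt : ENNReal.ofReal v ≠ ∞ := ENNReal.ofReal_ne_top
  rw [persp, radSup]
  simp only [ENNReal.mul_iSup]
  refine le_antisymm ?_ ?_
  · refine iSup_le fun u => iSup_le fun hu => iSup_le fun hcond => ?_
    have hcond' : persp f y (v * u) ≤ ENNReal.ofReal v := by
      rw [persp_smul_inv hv hu]
      calc ENNReal.ofReal v * persp f (v⁻¹ • y) u ≤ ENNReal.ofReal v * 1 :=
        mul_le_mul_right hcond _
      _ = ENNReal.ofReal v := mul_one _
    have : ENNReal.ofReal v * ENNReal.ofReal u = ENNReal.ofReal (v * u) :=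
      (ENNReal.ofReal_mul hv.le).symm
    rw [this]
    exact le_iSup_of_le (v * u) (le_iSup_of_le (mul_pos hv hu)
      (le_iSup_of_le hcond' le_rfl))
  · refine iSup_le fun w => iSup_le fun hw => iSup_le fun hcond => ?_
    set u := v⁻¹ * w with hu_def
    have hu : 0 < u := mul_pos (inv_pos.mpr hv) hw
    have hvu : v * u = w := by rw [hu_def, ← mul_assoc, mul_inv_cancel₀ hv.ne', one_mul]
    have hcond' : persp f (v⁻¹ • y) u ≤ 1 := by
      rw [← ENNReal.mul_le_mul_iff_right hv0 hvt, mul_one, ← persp_smul_inv hv hu, hvu]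
      exact hcond
    have hrw : ENNReal.ofReal w = ENNReal.ofReal v * ENNReal.ofReal u := by
      rw [← ENNReal.ofReal_mul hv.le, hvu]
    rw [hrw]
    exact le_iSup_of_le u (le_iSup_of_le hu (le_iSup_of_le hcond' le_rfl))

lemma persp_radInf {v : ℝ} (hv : 0 < v) (f : E → ℝ≥0∞) (y : E) :
    persp (radInf f) y v = Ur (persp f y) v := by
  have hv0 : ENNReal.ofReal v ≠ 0 := (ENNReal.ofReal_pos.mpr hv).ne'
  have hvt : ENNReal.ofReal v ≠ ∞ := ENNReal.ofReal_ne_top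
  rw [persp, radInf]
  rw [ENNReal.mul_iInf_of_ne hv0 hvt]
  simp only [ENNReal.mul_iInf_of_ne hv0 hvt]
  refine le_antisymm ?_ ?_
  · refine le_iInf fun w => le_iInf fun hw => le_iInf fun hcond => ?_
    set u := v⁻¹ * w with hu_def
    have hu : 0 < u := mul_pos (inv_pos.mpr hv) hw
    have hvu : v * u = w := by rw [hu_def, ← mul_assoc, mul_inv_cancel₀ hv.ne', one_mul]
    have hcond' : 1 ≤ persp f (v⁻¹ • y) u := by
      rw [← ENNReal.mul_le_mul_iff_right hv0 hvt, mul_one, ← persp_smul_inv hv hu, hvu]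
      exact hcond
    have hrw : ENNReal.ofReal w = ENNReal.ofReal v * ENNReal.ofReal u := by
      rw [← ENNReal.ofReal_mul hv.le, hvu]
    rw [hrw]
    exact iInf_le_of_le u (iInf_le_of_le hu (iInf_le_of_le hcond' le_rfl))
  · refine le_iInf fun u => le_iInf fun hu => le_iInf fun hcond => ?_
    have hcond' : ENNReal.ofReal v ≤ persp f y (v * u) := by
      rw [persp_smul_inv hv hu]
      calc ENNReal.ofReal v = ENNReal.ofReal v * 1 := (mul_one _).symm
      _ ≤ ENNReal.ofReal v * persp f (v⁻¹ • y) u := mul_le_mul_right hcond _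
    have : ENNReal.ofReal v * ENNReal.ofReal u = ENNReal.ofReal (v * u) :=
      (ENNReal.ofReal_mul hv.le).symm
    rw [this]
    exact iInf_le_of_le (v * u) (iInf_le_of_le (mul_pos hv hu)
      (iInf_le_of_le hcond' le_rfl))

/-- `f` is upper radial iff `(f^Γ)^Γ = f`; `f` is lower radial iff `(f_Γ)_Γ = f`. -/
theorem radial_function_duality (f : E → ℝ≥0∞) :
    (UpperRadial f ↔ radSup (radSup f) = f) ∧
    (LowerRadial f ↔ radInf (radInf f) = f) := by
  constructor
  · constructor
    · intro h
      funext y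
      rw [radSup_eq_Tr, Tr_congr (fun w hw => persp_radSup hw f y), ← persp_one f y]
      exact le_antisymm (Tr_Tr_le (h y).2 one_pos) (le_Tr_Tr (h y).1 one_pos)
    · intro h y
      have key : ∀ v, 0 < v → persp f y v = Tr (Tr (persp f y)) v := by
        intro v hv
        conv_lhs => rw [← h]
        rw [persp_radSup hv (radSup f) y, Tr_congr (fun w hw => persp_radSup hw f y)]
      have hmono : MonotoneOn (persp f y) (Ioi 0) := by
        intro a ha b hb hab
        rw [key a ha, key b hb]
        exact Tr_mono _ hab
      refine ⟨hmono, usc_on_of_right hmono ?_⟩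
      intro v hv c hc
      rw [key v hv] at hc
      obtain ⟨u, hu, hTu⟩ := Tr_right ((Tr_mono (persp f y)).monotoneOn _) hv hc
      exact ⟨u, hu, by rw [key u (hv.trans hu)]; exact hTu⟩
  · constructor
    · intro h
      funext y
      rw [radInf_eq_Ur, Ur_congr (fun w hw => persp_radInf hw f y), ← persp_one f y]
      exact le_antisymm (Ur_Ur_le (h y).1 one_pos) (le_Ur_Ur (h y).2 one_pos)
    · intro h y
      have key : ∀ v, 0 < v → persp f y v = Ur (Ur (persp f y)) v := by
        intro v hv
        conv_lhs => rw [← h]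
        rw [persp_radInf hv (radInf f) y, Ur_congr (fun w hw => persp_radInf hw f y)]
      have hmono : MonotoneOn (persp f y) (Ioi 0) := by
        intro a ha b hb hab
        rw [key a ha, key b hb]
        exact Ur_mono _ hab
      refine ⟨hmono, lsc_on_of_left hmono ?_⟩
      intro v hv c hc
      rw [key v hv] at hc
      obtain ⟨u, hu, huv, hUu⟩ := Ur_left ((Ur_mono (persp f y)).monotoneOn _) hv hc
      exact ⟨u, hu, huv, by rw [key u hu]; exact hUu⟩
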